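/- arXiv:1908.02251 — 5 statements merged into one kernel-verified Lean document; each statement's English description precedes it below -/
import Mathlib

section
/- For real numbers X > 0, Y > 0, L > 1 with XY > 1, the four quantities AB = XY(L−1)(Y²+1)(X²L+1) / [(X+Y)(XY−1)(XL+Y)(XYL−1)], CD = XY(L−1)(Y²L²+1)(X²L+1) / [(X+Y)(X+YL)(XYL−1)(XYL²−1)], BC = XY(L−1)(Y²L+1)(X²L²+1) / [(X+Y)(XL+Y)(XYL−1)(XYL²−1)], DA = XY(X²+1)(L−1)(Y²L+1) / [(X+Y)(XY−1)(X+YL)(XYL−1)] satisfy AB + CD = BC + DA. -/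
theorem stmt_4 (X Y L : ℝ) (hX : 0 < X) (hY : 0 < Y) (hL : 1 < L) (hXY : 1 < X * Y) :
    X*Y*(L-1)*(Y^2+1)*(X^2*L+1) / ((X+Y)*(X*Y-1)*(X*L+Y)*(X*Y*L-1))
      + X*Y*(L-1)*(Y^2*L^2+1)*(X^2*L+1) / ((X+Y)*(X+Y*L)*(X*Y*L-1)*(X*Y*L^2-1))
    = X*Y*(L-1)*(Y^2*L+1)*(X^2*L^2+1) / ((X+Y)*(X*L+Y)*(X*Y*L-1)*(X*Y*L^2-1))
      + X*Y*(X^2+1)*(L-1)*(Y^2*L+1) / ((X+Y)*(X*Y-1)*(X+Y*L)*(X*Y*L-1)) := by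
  have hL0 : (0:ℝ) < L := lt_trans one_pos hL
  have h1 : X + Y ≠ 0 := by positivity
  have h2 : X * Y - 1 ≠ 0 := by nlinarith
  have h3 : X * L + Y ≠ 0 := by positivity
  have h4 : X * Y * L - 1 ≠ 0 := by nlinarith
  have h5 : X + Y * L ≠ 0 := by positivity
  have h6 : X * Y * L ^ 2 - 1 ≠ 0 := by nlinarith [sq_nonneg (L-1), mul_pos hX hY]
  field_simp
  ring
end

section
/- Let α, β, γ, δ ∈ (0, π) with α + β + γ + δ = 2π, and set t₁ = tan(α/2), t₂ = tan(β/2), t₄ = tan(δ/2). Then t₁t₂ + t₁t₄ + t₂t₄ − 1 = cos(γ/2) / (cos(α/2)·cos(β/2)·cos(δ/2)). In particular, t₁t₂ + t₁t₄ + t₂t₄ − 1 > 0. -/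
theorem stmt_9 (α β γ δ : ℝ)
    (hα : α ∈ Set.Ioo 0 Real.pi) (hβ : β ∈ Set.Ioo 0 Real.pi)
    (hγ : γ ∈ Set.Ioo 0 Real.pi) (hδ : δ ∈ Set.Ioo 0 Real.pi)
    (hsum : α + β + γ + δ = 2 * Real.pi) :
    Real.tan (α/2) * Real.tan (β/2) + Real.tan (α/2) * Real.tan (δ/2)
        + Real.tan (β/2) * Real.tan (δ/2) - 1
      = Real.cos (γ/2) / (Real.cos (α/2) * Real.cos (β/2) * Real.cos (δ/2)) ∧
    0 < Real.tan (α/2) * Real.tan (β/2) + Real.tan (α/2) * Real.tan (δ/2)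
        + Real.tan (β/2) * Real.tan (δ/2) - 1 := by
  obtain ⟨ha0, haπ⟩ := hα
  obtain ⟨hb0, hbπ⟩ := hβ
  obtain ⟨hc0, hcπ⟩ := hγ
  obtain ⟨hd0, hdπ⟩ := hδ
  have pi_pos := Real.pi_pos
  have hca : (0:ℝ) < Real.cos (α/2) :=
    Real.cos_pos_of_mem_Ioo ⟨by linarith, by linarith⟩
  have hcb : (0:ℝ) < Real.cos (β/2) :=
    Real.cos_pos_of_mem_Ioo ⟨by linarith, by linarith⟩
  have hcc : (0:ℝ) < Real.cos (γ/2) :=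
    Real.cos_pos_of_mem_Ioo ⟨by linarith, by linarith⟩
  have hcd : (0:ℝ) < Real.cos (δ/2) :=
    Real.cos_pos_of_mem_Ioo ⟨by linarith, by linarith⟩
  have hkey : Real.cos (γ/2) = -Real.cos (α/2 + β/2 + δ/2) := by
    have : γ/2 = Real.pi - (α/2 + β/2 + δ/2) := by linarith
    rw [this, Real.cos_pi_sub]
  have heq : Real.tan (α/2) * Real.tan (β/2) + Real.tan (α/2) * Real.tan (δ/2)
        + Real.tan (β/2) * Real.tan (δ/2) - 1
      = Real.cos (γ/2) / (Real.cos (α/2) * Real.cos (β/2) * Real.cos (δ/2)) := by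
    rw [hkey, Real.cos_add, Real.cos_add, Real.sin_add, Real.tan_eq_sin_div_cos,
      Real.tan_eq_sin_div_cos, Real.tan_eq_sin_div_cos]
    field_simp
    ring
  refine ⟨heq, ?_⟩
  rw [heq]
  positivity
end

section
/- Let X > 0, Y > 0, L > 1 with XY > 1, and define t₁ = (XY−1)/(X+Y), t₂ = (XL+Y)/(XYL−1), t₄ = (X+YL)/(XYL−1). Then X satisfies the quadratic equation X² − [(2t₁ + t₂ − t₄ − t₁²(t₂+t₄))/(1 − t₁t₂)]·X − 1 = 0, provided 1 − t₁t₂ ≠ 0. -/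
theorem stmt_10 (X Y L : ℝ) (hX : 0 < X) (hY : 0 < Y) (hL : 1 < L) (hXY : 1 < X * Y)
    (t₁ t₂ t₄ : ℝ)
    (h1 : t₁ = (X*Y - 1)/(X + Y))
    (h2 : t₂ = (X*L + Y)/(X*Y*L - 1))
    (h4 : t₄ = (X + Y*L)/(X*Y*L - 1))
    (hne : 1 - t₁*t₂ ≠ 0) :
    X^2 - (2*t₁ + t₂ - t₄ - t₁^2*(t₂ + t₄))/(1 - t₁*t₂) * X - 1 = 0 := by
  have hS : X + Y ≠ 0 := by positivity
  have hD : X*Y*L - 1 ≠ 0 := by nlinarith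
  have hX0 : X ≠ 0 := ne_of_gt hX
  have key : (2*t₁ + t₂ - t₄ - t₁^2*(t₂ + t₄))/(1 - t₁*t₂) = X - 1/X := by
    rw [div_eq_iff hne]
    subst h1 h2 h4
    field_simp
    ring
  rw [key]
  field_simp
  ring
end

section
/- Let a > 1 and let T(x,y) = (a^x(a^{2y}−1)/((a^x+a^y)(a^{x+y}−1)), 2a^{x+y}/((a^x+a^y)(a^{x+y}−1))) be defined on the half-plane x + y > 0. Then T is injective on this half-plane. -/
theorem stmt_17 (a : ℝ) (ha : 1 < a)
    (T : ℝ × ℝ → ℝ × ℝ)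
    (hT : ∀ x y : ℝ, T (x, y) =
      (a ^ x * (a ^ (2*y) - 1) / ((a ^ x + a ^ y) * (a ^ (x + y) - 1)),
       2 * a ^ (x + y) / ((a ^ x + a ^ y) * (a ^ (x + y) - 1)))) :
    Set.InjOn T {p : ℝ × ℝ | 0 < p.1 + p.2} := by
  have ha0 : (0:ℝ) < a := by linarith
  rintro ⟨x1, y1⟩ hp ⟨x2, y2⟩ hq heq
  simp only [Set.mem_setOf_eq] at hp hq
  rw [hT, hT, Prod.mk.injEq] at heq
  obtain ⟨hu, hv⟩ := heq
  set X1 := a ^ x1 with hX1def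
  set Y1 := a ^ y1 with hY1def
  set X2 := a ^ x2 with hX2def
  set Y2 := a ^ y2 with hY2def
  have hX1 : 0 < X1 := Real.rpow_pos_of_pos ha0 x1
  have hY1 : 0 < Y1 := Real.rpow_pos_of_pos ha0 y1
  have hX2 : 0 < X2 := Real.rpow_pos_of_pos ha0 x2
  have hY2 : 0 < Y2 := Real.rpow_pos_of_pos ha0 y2
  have hs1 : a ^ (x1 + y1) = X1 * Y1 := Real.rpow_add ha0 _ _
  have hs2 : a ^ (x2 + y2) = X2 * Y2 := Real.rpow_add ha0 _ _
  have hq1 : a ^ (2 * y1) = Y1 ^ 2 := by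
    rw [two_mul, Real.rpow_add ha0, sq]
  have hq2 : a ^ (2 * y2) = Y2 ^ 2 := by
    rw [two_mul, Real.rpow_add ha0, sq]
  have hP1 : 1 < X1 * Y1 := by
    rw [← hs1]
    exact Real.one_lt_rpow_iff_of_pos ha0 |>.mpr (Or.inl ⟨ha, hp⟩)
  have hP2 : 1 < X2 * Y2 := by
    rw [← hs2]
    exact Real.one_lt_rpow_iff_of_pos ha0 |>.mpr (Or.inl ⟨ha, hq⟩)
  have hD1 : 0 < (X1 + Y1) * (X1 * Y1 - 1) :=
    mul_pos (by linarith) (by linarith)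
  have hD2 : 0 < (X2 + Y2) * (X2 * Y2 - 1) :=
    mul_pos (by linarith) (by linarith)
  rw [hs1, hs2, hq1, hq2] at hu
  rw [hs1, hs2] at hv
  set D1 := (X1 + Y1) * (X1 * Y1 - 1) with hD1def
  set D2 := (X2 + Y2) * (X2 * Y2 - 1) with hD2def
  -- cross-multiplied equations
  have hu' : X1 * (Y1 ^ 2 - 1) * D2 = X2 * (Y2 ^ 2 - 1) * D1 :=
    (div_eq_div_iff hD1.ne' hD2.ne').mp hu
  have hv' : (X1 * Y1) * D2 = (X2 * Y2) * D1 := by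
    have := (div_eq_div_iff hD1.ne' hD2.ne').mp hv
    nlinarith [this]
  -- the complementary equation for X
  have hw' : Y1 * (X1 ^ 2 - 1) * D2 = Y2 * (X2 ^ 2 - 1) * D1 := by
    have e1 : Y1 * (X1 ^ 2 - 1) = D1 - X1 * (Y1 ^ 2 - 1) := by rw [hD1def]; ring
    have e2 : Y2 * (X2 ^ 2 - 1) = D2 - X2 * (Y2 ^ 2 - 1) := by rw [hD2def]; ring
    rw [e1, e2]; linear_combination -hu'
  -- recover Y
  have hYkey : (Y1 - Y2) * (X1 * X2 * (Y1 * Y2 + 1) * D1 * D2) = 0 := by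
    linear_combination (X2 * Y2 * D1) * hu' - (X2 * (Y2 ^ 2 - 1) * D1) * hv'
  have hYeq : Y1 = Y2 := by
    rcases mul_eq_zero.mp hYkey with h | h
    · linarith
    · have hYY : 0 < Y1 * Y2 + 1 := by have := mul_pos hY1 hY2; linarith
      have hpos : 0 < X1 * X2 * (Y1 * Y2 + 1) * D1 * D2 :=
        mul_pos (mul_pos (mul_pos (mul_pos hX1 hX2) hYY) hD1) hD2
      linarith
  -- recover X
  have hXkey : (X1 - X2) * (Y1 * Y2 * (X1 * X2 + 1) * D1 * D2) = 0 := by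
    linear_combination (X2 * Y2 * D1) * hw' - (Y2 * (X2 ^ 2 - 1) * D1) * hv'
  have hXeq : X1 = X2 := by
    rcases mul_eq_zero.mp hXkey with h | h
    · linarith
    · have hXX : 0 < X1 * X2 + 1 := by have := mul_pos hX1 hX2; linarith
      have hpos : 0 < Y1 * Y2 * (X1 * X2 + 1) * D1 * D2 :=
        mul_pos (mul_pos (mul_pos (mul_pos hY1 hY2) hXX) hD1) hD2
      linarith
  have hx : x1 = x2 := by
    have h1 : a ^ x1 ≤ a ^ x2 := le_of_eq hXeq
    have h2 : a ^ x2 ≤ a ^ x1 := le_of_eq hXeq.symm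
    have := (Real.rpow_le_rpow_left_iff ha).mp h1
    have := (Real.rpow_le_rpow_left_iff ha).mp h2
    linarith
  have hy : y1 = y2 := by
    have h1 : a ^ y1 ≤ a ^ y2 := le_of_eq hYeq
    have h2 : a ^ y2 ≤ a ^ y1 := le_of_eq hYeq.symm
    have := (Real.rpow_le_rpow_left_iff ha).mp h1
    have := (Real.rpow_le_rpow_left_iff ha).mp h2
    linarith
  simp [hx, hy]
end

section
/- For real numbers X > 0, Y > 0, L > 1 with XY > 1, define t₁ = (XY−1)/(X+Y), t₂ = (XL+Y)/(XYL−1), t₃ = (XYL²−1)/(L(X+Y)), t₄ = (X+YL)/(XYL−1). Then t₁ + t₂ + t₃ + t₄ = t₁t₂t₃ + t₁t₂t₄ + t₁t₃t₄ + t₂t₃t₄. -/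
theorem stmt_19 (X Y L : ℝ) (hX : 0 < X) (hY : 0 < Y) (hL : 1 < L) (hXY : 1 < X * Y)
    (t₁ t₂ t₃ t₄ : ℝ)
    (h1 : t₁ = (X*Y - 1)/(X + Y))
    (h2 : t₂ = (X*L + Y)/(X*Y*L - 1))
    (h3 : t₃ = (X*Y*L^2 - 1)/(L*(X + Y)))
    (h4 : t₄ = (X + Y*L)/(X*Y*L - 1)) :
    t₁ + t₂ + t₃ + t₄ = t₁*t₂*t₃ + t₁*t₂*t₄ + t₁*t₃*t₄ + t₂*t₃*t₄ := by
  have hs : X + Y ≠ 0 := by positivity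
  have hL0 : L ≠ 0 := by linarith
  have hd : X*Y*L - 1 ≠ 0 := by nlinarith
  subst h1 h2 h3 h4
  field_simp
  ring
end
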